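/- arXiv:1502.02858 — 2 statements merged into one kernel-verified Lean document; each statement's English description precedes it below -/
import Mathlib

section
/- Let γ, ε be real constants with γ ≠ 1, γ ≠ 2, and 7γ ≠ 4ε + 6, let z₁ ≠ 0, ρ₀ ≠ 0, and set α = 1 − (1 − z₂/z₁)·(7γ − 4ε − 6)/(γ − 2). Define ρ(z) = ρ₀·(1 − z/z₁)^{(γ−4ε)/(7γ−4ε−6)} · (1 − z/(αz₁))^{(−6γ² + 4γ + 8ε)/((2−γ)(7γ−4ε−6))} on an open interval around 0 where 1 − z/z₁ > 0 and 1 − z/(αz₁) > 0 (assuming α ≠ 0). Then ρ is differentiable and satisfies (γ−1)·ρ'(z) = −(((z−z₁)γ + (z₂−z₁)(4ε−γ)) / ((z−z₁)(2−γ) + (z₂−z₁)(7γ−4ε−6))) · (γ−1)·ρ(z)/(z−z₁) on that interval, provided the denominator (z−z₁)(2−γ) + (z₂−z₁)(7γ−4ε−6) is nonzero there. -/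
set_option maxHeartbeats 2000000


/-- The explicit power-law density eq. (22) solves the self-gravitating hydrostatic
equilibrium ODE eq. (21) for constant γ, ε. -/
theorem stmt_6 (γ ε z₁ z₂ ρ₀ α a b : ℝ)
    (hγ1 : γ ≠ 1) (hγ2 : γ ≠ 2) (hγε : 7 * γ ≠ 4 * ε + 6)
    (hz₁ : z₁ ≠ 0) (hρ₀ : ρ₀ ≠ 0) (hα : α ≠ 0)
    (hαdef : α = 1 - (1 - z₂ / z₁) * (7 * γ - 4 * ε - 6) / (γ - 2))
    (hI : (0:ℝ) ∈ Set.Ioo a b)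
    (hpos1 : ∀ z ∈ Set.Ioo a b, 1 - z / z₁ > 0)
    (hpos2 : ∀ z ∈ Set.Ioo a b, 1 - z / (α * z₁) > 0)
    (ρ : ℝ → ℝ)
    (hρ : ∀ z, ρ z = ρ₀ * (1 - z / z₁) ^ ((γ - 4 * ε) / (7 * γ - 4 * ε - 6)) *
      (1 - z / (α * z₁)) ^
        ((-6 * γ ^ 2 + 4 * γ + 8 * ε) / ((2 - γ) * (7 * γ - 4 * ε - 6)))) :
    ∀ z ∈ Set.Ioo a b,
      (z - z₁) * (2 - γ) + (z₂ - z₁) * (7 * γ - 4 * ε - 6) ≠ 0 →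
      DifferentiableAt ℝ ρ z ∧
      (γ - 1) * deriv ρ z =
        -(((z - z₁) * γ + (z₂ - z₁) * (4 * ε - γ)) /
          ((z - z₁) * (2 - γ) + (z₂ - z₁) * (7 * γ - 4 * ε - 6))) *
          ((γ - 1) * ρ z / (z - z₁)) := by
  intro z hz hB
  have hD : 7 * γ - 4 * ε - 6 ≠ 0 := fun h => hγε (by linarith)
  have hγ2' : γ - 2 ≠ 0 := sub_ne_zero.mpr hγ2
  have h2γ : (2:ℝ) - γ ≠ 0 := fun h => hγ2 (by linarith)
  set p := (γ - 4 * ε) / (7 * γ - 4 * ε - 6) with hp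
  set q := (-6 * γ ^ 2 + 4 * γ + 8 * ε) / ((2 - γ) * (7 * γ - 4 * ε - 6)) with hq
  have hu : 0 < 1 - z / z₁ := hpos1 z hz
  have hv : 0 < 1 - z / (α * z₁) := hpos2 z hz
  have hu0 : 1 - z / z₁ ≠ 0 := ne_of_gt hu
  have hv0 : 1 - z / (α * z₁) ≠ 0 := ne_of_gt hv
  have hαz₁ : α * z₁ ≠ 0 := mul_ne_zero hα hz₁
  have hzz₁ : z - z₁ ≠ 0 := by
    intro h
    apply hu0
    have : z = z₁ := by linarith
    rw [this, div_self hz₁]; ring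
  -- α relation in polynomial form
  have hkey : α * z₁ * (γ - 2) = z₁ * (γ - 2) - (z₁ - z₂) * (7 * γ - 4 * ε - 6) := by
    rw [hαdef]; field_simp
  -- derivative of ρ
  have hd1 : HasDerivAt (fun z : ℝ => 1 - z / z₁) (-(1 / z₁)) z := by
    simpa using ((hasDerivAt_id z).div_const z₁).const_sub 1
  have hd2 : HasDerivAt (fun z : ℝ => 1 - z / (α * z₁)) (-(1 / (α * z₁))) z := by
    simpa using ((hasDerivAt_id z).div_const (α * z₁)).const_sub 1
  have h1 := (hd1.rpow_const (p := p) (Or.inl hu0)).const_mul ρ₀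
  have h2 := hd2.rpow_const (p := q) (Or.inl hv0)
  have hder : HasDerivAt ρ
      ((ρ₀ * (-(1 / z₁) * p * (1 - z / z₁) ^ (p - 1))) * (1 - z / (α * z₁)) ^ q
        + (ρ₀ * (1 - z / z₁) ^ p) * (-(1 / (α * z₁)) * q * (1 - z / (α * z₁)) ^ (q - 1))) z := by
    have : ρ = fun z => ρ₀ * (1 - z / z₁) ^ p * (1 - z / (α * z₁)) ^ q := funext hρ
    rw [this]
    exact h1.mul h2
  refine ⟨hder.differentiableAt, ?_⟩
  rw [hder.deriv, hρ z]
  rw [Real.rpow_sub hu, Real.rpow_one, Real.rpow_sub hv, Real.rpow_one]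
  have hzα : z - α * z₁ ≠ 0 := by
    intro h
    apply hv0
    have hzeq : z = α * z₁ := by linarith
    rw [hzeq, div_self hαz₁]; ring
  have step1 : (γ - 1) *
      (ρ₀ * (-(1 / z₁) * p * ((1 - z / z₁) ^ p / (1 - z / z₁))) * (1 - z / (α * z₁)) ^ q +
        ρ₀ * (1 - z / z₁) ^ p *
          (-(1 / (α * z₁)) * q * ((1 - z / (α * z₁)) ^ q / (1 - z / (α * z₁))))) =
      ((γ - 1) * (ρ₀ * (1 - z / z₁) ^ p * (1 - z / (α * z₁)) ^ q)) *
        (p / (z - z₁) + q / (z - α * z₁)) := by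
    generalize (1 - z / z₁) ^ p = X
    generalize (1 - z / (α * z₁)) ^ q = Y
    have h1z : z₁ - z ≠ 0 := fun h => hzz₁ (by linarith)
    have h2z : α * z₁ - z ≠ 0 := fun h => hzα (by linarith)
    have h3z : z - z₁ * α ≠ 0 := fun h => hzα (by linarith)
    have h4z : z₁ * α - z ≠ 0 := fun h => hzα (by linarith)
    field_simp [hz₁, hαz₁, hzz₁, hzα, h1z, h2z, sub_ne_zero.mpr]
    ring
  have hzαval : z - α * z₁ =
      ((z - z₁) * (2 - γ) + (z₂ - z₁) * (7 * γ - 4 * ε - 6)) / (2 - γ) := by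
    rw [eq_div_iff h2γ]
    linear_combination hkey
  have step2 : p / (z - z₁) + q / (z - α * z₁) =
      -(((z - z₁) * γ + (z₂ - z₁) * (4 * ε - γ)) /
        ((z - z₁) * (2 - γ) + (z₂ - z₁) * (7 * γ - 4 * ε - 6))) / (z - z₁) := by
    rw [hzαval, hp, hq]
    have hD' : γ * 7 - 4 * ε - 6 ≠ 0 := fun h => hD (by linarith)
    have hB' : (z - z₁) * (2 - γ) + (γ * 7 - 4 * ε - 6) * (z₂ - z₁) ≠ 0 :=
      fun h => hB (by linarith)
    field_simp
    ring
  rw [step1, step2]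
  ring
end

section
/- Let γ, ε be constants with γ ≠ 1, 2 − γ ≠ 0, 7γ − 4ε − 6 ≠ 0, and let z₁, z₂ be constants with z₁ ≠ 0. Suppose ρ : I → ℝ is positive and differentiable on an open interval I around 0 and satisfies the logarithmic-derivative equation ρ'/ρ = −(1/(z−z₁)) · ((z−z₁)γ + (z₂−z₁)(4ε−γ)) / ((z−z₁)(2−γ) + (z₂−z₁)(7γ−4ε−6)), with denominators nonvanishing on I. Then ρ(z) = ρ(0)·(1 − z/z₁)^{(γ−4ε)/(7γ−4ε−6)}·(1 − z/(αz₁))^{(−6γ²+4γ+8ε)/((2−γ)(7γ−4ε−6))} on I, where α = 1 − (1 − z₂/z₁)(7γ−4ε−6)/(γ−2), provided 1 − z/z₁ > 0 and 1 − z/(αz₁) > 0 on I. -/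
/-- Uniqueness direction of the integration of eq. (21): a positive solution of the
logarithmic-derivative ODE must be the power-law eq. (22). -/
theorem stmt_15 (γ ε z₁ z₂ a b : ℝ)
    (hγ1 : γ ≠ 1) (hγ2 : 2 - γ ≠ 0) (hγε : 7 * γ - 4 * ε - 6 ≠ 0) (hz₁ : z₁ ≠ 0)
    (α : ℝ) (hα : α = 1 - (1 - z₂ / z₁) * (7 * γ - 4 * ε - 6) / (γ - 2))
    (hI : (0:ℝ) ∈ Set.Ioo a b)
    (ρ : ℝ → ℝ) (hρpos : ∀ z ∈ Set.Ioo a b, 0 < ρ z)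
    (hρdiff : DifferentiableOn ℝ ρ (Set.Ioo a b))
    (hden : ∀ z ∈ Set.Ioo a b,
      (z - z₁) * (2 - γ) + (z₂ - z₁) * (7 * γ - 4 * ε - 6) ≠ 0)
    (hzz₁ : ∀ z ∈ Set.Ioo a b, z ≠ z₁)
    (hpos1 : ∀ z ∈ Set.Ioo a b, 1 - z / z₁ > 0)
    (hpos2 : ∀ z ∈ Set.Ioo a b, 1 - z / (α * z₁) > 0)
    (hode : ∀ z ∈ Set.Ioo a b, deriv ρ z / ρ z =
      -(1 / (z - z₁)) * (((z - z₁) * γ + (z₂ - z₁) * (4 * ε - γ)) /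
        ((z - z₁) * (2 - γ) + (z₂ - z₁) * (7 * γ - 4 * ε - 6)))) :
    ∀ z ∈ Set.Ioo a b, ρ z =
      ρ 0 * (1 - z / z₁) ^ ((γ - 4 * ε) / (7 * γ - 4 * ε - 6)) *
        (1 - z / (α * z₁)) ^
          ((-6 * γ ^ 2 + 4 * γ + 8 * ε) / ((2 - γ) * (7 * γ - 4 * ε - 6))) := by
  have hγ2' : γ - 2 ≠ 0 := fun h => hγ2 (by linarith)
  set p : ℝ := (γ - 4 * ε) / (7 * γ - 4 * ε - 6) with hp
  set q : ℝ := (-6 * γ ^ 2 + 4 * γ + 8 * ε) / ((2 - γ) * (7 * γ - 4 * ε - 6)) with hq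
  set c : ℝ := α * z₁ with hc
  have hD : ∀ z : ℝ, (z - z₁) * (2 - γ) + (z₂ - z₁) * (7 * γ - 4 * ε - 6)
      = (2 - γ) * (z - c) := by
    intro z
    rw [hc, hα]
    field_simp
    ring
  have hzc : ∀ z ∈ Set.Ioo a b, z - c ≠ 0 := by
    intro z hz
    have := hden z hz
    rw [hD z] at this
    exact right_ne_zero_of_mul this
  have hc0 : c ≠ 0 := by
    have := hzc 0 hI
    intro h; apply this; rw [h]; ring
  have hcc : c = z₁ + (z₂ - z₁) * (7 * γ - 4 * ε - 6) / (γ - 2) := by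
    rw [hc, hα]; field_simp; ring
  clear_value p q c
  -- the power-law function
  set g : ℝ → ℝ := fun z => (1 - z / z₁) ^ p * (1 - z / c) ^ q with hg
  have hgpos : ∀ z ∈ Set.Ioo a b, 0 < g z := fun z hz =>
    mul_pos (Real.rpow_pos_of_pos (hpos1 z hz) p) (Real.rpow_pos_of_pos (hpos2 z hz) q)
  have hgderiv : ∀ z ∈ Set.Ioo a b,
      HasDerivAt g (g z * (p / (z - z₁) + q / (z - c))) z := by
    intro z hz
    have h1 : HasDerivAt (fun z : ℝ => 1 - z / z₁) (-(1 / z₁)) z := by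
      simpa using ((hasDerivAt_id z).div_const z₁).const_sub 1
    have h2 : HasDerivAt (fun z : ℝ => 1 - z / c) (-(1 / c)) z := by
      simpa using ((hasDerivAt_id z).div_const c).const_sub 1
    have hb1 : (0:ℝ) < 1 - z / z₁ := hpos1 z hz
    have hb2 : (0:ℝ) < 1 - z / c := hpos2 z hz
    have h1' := h1.rpow_const (p := p) (Or.inl hb1.ne')
    have h2' := h2.rpow_const (p := q) (Or.inl hb2.ne')
    have := h1'.mul h2'
    refine (this : HasDerivAt g _ z).congr_deriv ?_
    have e1 : (1 - z / z₁) ^ (p - 1) = (1 - z / z₁) ^ p / (1 - z / z₁) := by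
      rw [Real.rpow_sub hb1, Real.rpow_one]
    have e2 : (1 - z / c) ^ (q - 1) = (1 - z / c) ^ q / (1 - z / c) := by
      rw [Real.rpow_sub hb2, Real.rpow_one]
    rw [e1, e2, hg]
    have hz1 : z - z₁ ≠ 0 := sub_ne_zero.mpr (hzz₁ z hz)
    have hzc' : z - c ≠ 0 := hzc z hz
    have hz1' : z₁ - z ≠ 0 := fun h => hz1 (by linarith)
    have hzc'' : c - z ≠ 0 := fun h => hzc' (by linarith)
    have r1 : (1 : ℝ) - z / z₁ = (z₁ - z) / z₁ := by field_simp
    have r2 : (1 : ℝ) - z / c = (c - z) / c := by field_simp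
    simp only [r1, r2]
    field_simp
    ring
  -- ρ satisfies the same logarithmic derivative
  have hρderiv : ∀ z ∈ Set.Ioo a b,
      HasDerivAt ρ (ρ z * (p / (z - z₁) + q / (z - c))) z := by
    intro z hz
    have hzopen : Set.Ioo a b ∈ nhds z := (isOpen_Ioo).mem_nhds hz
    have hdiff : DifferentiableAt ℝ ρ z := (hρdiff z hz).differentiableAt hzopen
    have hode' := hode z hz
    have hρz : ρ z ≠ 0 := (hρpos z hz).ne'
    have hz1 : z - z₁ ≠ 0 := sub_ne_zero.mpr (hzz₁ z hz)
    have hzc' : z - c ≠ 0 := hzc z hz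
    have hz2 : z₂ - z₁ = (γ - 2) * (c - z₁) / (7 * γ - 4 * ε - 6) := by
      rw [hcc, eq_div_iff hγε]; field_simp; ring
    have key : -(1 / (z - z₁)) * (((z - z₁) * γ + (z₂ - z₁) * (4 * ε - γ)) /
        ((z - z₁) * (2 - γ) + (z₂ - z₁) * (7 * γ - 4 * ε - 6)))
        = p / (z - z₁) + q / (z - c) := by
      have hγε' : γ * 7 - 4 * ε - 6 ≠ 0 := by contrapose! hγε; linarith
      rw [hD z, hz2, hp, hq]
      field_simp
      ring
    have hderivval : deriv ρ z = ρ z * (p / (z - z₁) + q / (z - c)) := by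
      have h1 := (div_eq_iff hρz).mp (hode z hz)
      rw [h1, key, mul_comm]
    rw [← hderivval]
    exact hdiff.hasDerivAt
  -- the quotient has zero derivative
  set h : ℝ → ℝ := fun z => ρ z / g z with hh
  have hhderiv : ∀ z ∈ Set.Ioo a b, HasDerivAt h 0 z := by
    intro z hz
    have hgz : g z ≠ 0 := (hgpos z hz).ne'
    have := (hρderiv z hz).div (hgderiv z hz) hgz
    refine (this : HasDerivAt h _ z).congr_deriv ?_
    rw [div_eq_iff (pow_ne_zero 2 hgz)]
    ring
  have hconst : ∀ z ∈ Set.Ioo a b, h z = h 0 := by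
    intro z hz
    apply (convex_Ioo a b).is_const_of_fderivWithin_eq_zero
      (fun x hx => ((hhderiv x hx).differentiableAt).differentiableWithinAt)
      (fun x hx => ?_) hz hI
    rw [fderivWithin_of_isOpen isOpen_Ioo hx]
    ext y
    simp [(hhderiv x hx).deriv, ← toSpanSingleton_deriv]
  intro z hz
  have h0 : g 0 = 1 := by
    rw [hg]; simp
  have hgz : g z ≠ 0 := (hgpos z hz).ne'
  have := hconst z hz
  rw [hh] at this
  simp only at this
  rw [h0, div_one] at this
  have : ρ z = ρ 0 * g z := by
    field_simp at this
    linarith [this]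
  rw [this, hg]
  ring
end
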